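/- arXiv:2006.07624 — 2 statements merged into one kernel-verified Lean document; each statement's English description precedes it below -/
import Mathlib

section
/- Let (c_j)_{j ∈ ℤ} be an absolutely summable sequence of real numbers with c_j = c_{-j} for all j, and let 0 ≤ a < b ≤ 1. Then (1/n) · Σ_{i=⌊an⌋+1}^{⌊bn⌋} Σ_{j=⌊an⌋+1}^{⌊bn⌋} (i/n) · c_{j-i} converges, as n → ∞, to ((b² - a²)/2) · Σ_{j ∈ ℤ} c_j. -/
open Filter Finset

private lemma gauss_sum (L : ℤ) : ∀ R : ℤ, L - 1 ≤ R →
    (∑ i ∈ Finset.Icc L R, (i : ℝ)) * 2 = ((L : ℝ) + R) * ((R : ℝ) - L + 1) := by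
  refine Int.le_induction ?_ ?_
  · rw [show Finset.Icc L (L-1) = ∅ from Finset.Icc_eq_empty (by omega)]
    push_cast; simp
  · intro R hLR ih
    rw [show Finset.Icc L (R+1) = insert (R+1) (Finset.Icc L R) from by
      ext x; simp [Finset.mem_Icc]; omega]
    rw [Finset.sum_insert (by simp [Finset.mem_Icc])]
    push_cast at ih ⊢
    linear_combination ih

private lemma floor_div_tendsto (a : ℝ) :
    Tendsto (fun n : ℕ => (⌊a * (n : ℝ)⌋ : ℝ) / n) atTop (nhds a) := by
  apply tendsto_of_tendsto_of_tendsto_of_le_of_le'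
    (g := fun n : ℕ => a - 1 / n) (h := fun _ : ℕ => a)
  · simpa using tendsto_const_nhds.sub (tendsto_one_div_atTop_nhds_zero_nat (𝕜 := ℝ))
  · exact tendsto_const_nhds
  · filter_upwards [eventually_ge_atTop 1] with n hn
    have hn0 : (0 : ℝ) < n := by exact_mod_cast hn
    rw [sub_le_iff_le_add, ← add_div, le_div_iff₀ hn0]
    have := Int.sub_one_lt_floor (a * n)
    nlinarith [this]
  · filter_upwards [eventually_ge_atTop 1] with n hn
    have hn0 : (0 : ℝ) < n := by exact_mod_cast hn
    rw [div_le_iff₀ hn0]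
    have := Int.floor_le (a * n)
    nlinarith [this]

theorem stmt_1 (c : ℤ → ℝ) (hsum : Summable (fun j => |c j|))
    (hsym : ∀ j, c j = c (-j)) (a b : ℝ) (ha : 0 ≤ a) (hab : a < b) (hb : b ≤ 1) :
    Filter.Tendsto (fun n : ℕ =>
      (1 / (n : ℝ)) * ∑ i ∈ Finset.Icc (⌊a * (n : ℝ)⌋ + 1) ⌊b * (n : ℝ)⌋,
        ∑ j ∈ Finset.Icc (⌊a * (n : ℝ)⌋ + 1) ⌊b * (n : ℝ)⌋, ((i : ℝ) / (n : ℝ)) * c (j - i))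
      Filter.atTop (nhds (((b ^ 2 - a ^ 2) / 2) * ∑' j, c j)) := by
  -- notation
  set S : ℕ → ℤ → ℝ := fun n k =>
    ∑ i ∈ Finset.Icc (⌊a * (n : ℝ)⌋ + 1 + max 0 (-k)) (⌊b * (n : ℝ)⌋ - max 0 k), (i : ℝ)
    with hS
  set F : ℕ → ℤ → ℝ := fun n k => c k * (S n k / (n : ℝ) ^ 2) with hF
  -- the key identity transforming the double sum into a tsum over the lag k
  have key : ∀ n : ℕ,
      (1 / (n : ℝ)) * ∑ i ∈ Finset.Icc (⌊a * (n : ℝ)⌋ + 1) ⌊b * (n : ℝ)⌋,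
        ∑ j ∈ Finset.Icc (⌊a * (n : ℝ)⌋ + 1) ⌊b * (n : ℝ)⌋, ((i : ℝ) / (n : ℝ)) * c (j - i)
      = ∑' k, F n k := by
    intro n
    set A := ⌊a * (n : ℝ)⌋ with hA
    set B := ⌊b * (n : ℝ)⌋ with hB
    have hAB : A ≤ B := Int.floor_le_floor (by nlinarith [Nat.cast_nonneg (α := ℝ) n])
    -- step 1 : reindex the inner sum by k = j - i  and extend to  Icc (A-B) (B-A)
    have h1 : ∀ i ∈ Finset.Icc (A+1) B,
        ∑ j ∈ Finset.Icc (A+1) B, ((i : ℝ) / (n : ℝ)) * c (j - i)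
        = ∑ k ∈ Finset.Icc (A-B) (B-A),
            (if A + 1 ≤ i + k ∧ i + k ≤ B then ((i : ℝ) / (n : ℝ)) * c k else 0) := by
      intro i hi
      rw [Finset.mem_Icc] at hi
      rw [show Finset.Icc (A+1) B
            = (Finset.Icc (A+1-i) (B-i)).map (addLeftEmbedding i) from by
          rw [Finset.map_add_left_Icc]; congr 1 <;> ring]
      rw [Finset.sum_map]
      simp only [addLeftEmbedding_apply, add_sub_cancel_left]
      rw [show Finset.Icc (A+1-i) (B-i)
            = (Finset.Icc (A-B) (B-A)).filter (fun k => A + 1 ≤ i + k ∧ i + k ≤ B) from by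
          ext k; simp only [Finset.mem_Icc, Finset.mem_filter]; omega]
      rw [Finset.sum_filter]
    rw [Finset.sum_congr rfl h1, Finset.sum_comm]
    -- step 2 : evaluate the inner sum over i
    have h2 : ∀ k ∈ Finset.Icc (A-B) (B-A),
        ∑ i ∈ Finset.Icc (A+1) B,
            (if A + 1 ≤ i + k ∧ i + k ≤ B then ((i : ℝ) / (n : ℝ)) * c k else 0)
        = ∑ i ∈ Finset.Icc (A + 1 + max 0 (-k)) (B - max 0 k), ((i : ℝ) / (n : ℝ)) * c k := by
      intro k _
      rw [← Finset.sum_filter]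
      apply Finset.sum_congr _ (fun _ _ => rfl)
      ext i; simp only [Finset.mem_Icc, Finset.mem_filter]; omega
    rw [Finset.sum_congr rfl h2]
    -- step 3 : identify with the tsum of F n
    rw [tsum_eq_sum (s := Finset.Icc (A-B) (B-A)) (f := F n) (by
      intro k hk
      rw [Finset.mem_Icc] at hk
      have : Finset.Icc (A + 1 + max 0 (-k)) (B - max 0 k) = ∅ :=
        Finset.Icc_eq_empty (by omega)
      simp [hF, hS, ← hA, ← hB, this])]
    rw [Finset.mul_sum]
    apply Finset.sum_congr rfl
    intro k _
    simp only [hF, hS, ← hA, ← hB]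
    rw [← Finset.sum_mul, ← Finset.sum_div]
    ring
  -- rewrite the limit as a tsum
  have hlim : ((b ^ 2 - a ^ 2) / 2) * ∑' j, c j = ∑' k, c k * ((b ^ 2 - a ^ 2) / 2) := by
    rw [tsum_mul_right, mul_comm]
  rw [hlim]
  refine Filter.Tendsto.congr (fun n => (key n).symm) ?_
  -- dominated convergence
  apply tendsto_tsum_of_dominated_convergence (bound := fun k => |c k|) hsum
  · -- pointwise convergence
    intro k
    have hx := floor_div_tendsto a
    have hy := floor_div_tendsto b
    have hz := tendsto_one_div_atTop_nhds_zero_nat (𝕜 := ℝ)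
    set p : ℤ := max 0 (-k) with hp
    set q : ℤ := max 0 k with hq
    have hp0 : 0 ≤ p := le_max_left _ _
    have hq0 : 0 ≤ q := le_max_left _ _
    have main : Tendsto (fun n : ℕ =>
        c k * ((((⌊a*(n:ℝ)⌋:ℝ)/n + (⌊b*(n:ℝ)⌋:ℝ)/n + ((1+p-q : ℤ):ℝ)*(1/n)) *
          ((⌊b*(n:ℝ)⌋:ℝ)/n - (⌊a*(n:ℝ)⌋:ℝ)/n - ((p+q : ℤ):ℝ)*(1/n)))/2)) atTop
        (nhds (c k * (((a + b + ((1+p-q : ℤ):ℝ)*0) * (b - a - ((p+q : ℤ):ℝ)*0))/2))) := by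
      exact ((((hx.add hy).add (hz.const_mul _)).mul
        ((hy.sub hx).sub (hz.const_mul _))).div_const 2).const_mul (c k)
    have hval : c k * (((a + b + ((1+p-q : ℤ):ℝ)*0) * (b - a - ((p+q : ℤ):ℝ)*0))/2)
        = c k * ((b ^ 2 - a ^ 2) / 2) := by ring
    rw [hval] at main
    refine main.congr' ?_
    have hev : Tendsto (fun n : ℕ => (b - a) * (n : ℝ)) atTop atTop :=
      Filter.Tendsto.const_mul_atTop (by linarith) tendsto_natCast_atTop_atTop
    filter_upwards [eventually_ge_atTop 1, hev.eventually_ge_atTop ((p+q+1 : ℤ) : ℝ)]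
      with n hn hbig
    have hn0 : (0 : ℝ) < n := by exact_mod_cast hn
    set A := ⌊a * (n : ℝ)⌋ with hA
    set B := ⌊b * (n : ℝ)⌋ with hB
    have hfl : A + (p + q + 1) ≤ B := by
      have : A + (p+q+1) = ⌊a * (n:ℝ) + ((p+q+1 : ℤ) : ℝ)⌋ := (Int.floor_add_intCast _ _).symm
      rw [this]
      exact Int.floor_le_floor (by linarith)
    have hLR : A + 1 + p ≤ (B - q) + 1 := by omega
    have hg := gauss_sum (A + 1 + p) (B - q) (by omega)
    have hSval : S n k = (((A:ℝ) + 1 + p) + ((B:ℝ) - q)) * (((B:ℝ) - q) - ((A:ℝ) + 1 + p) + 1) / 2 := by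
      rw [eq_div_iff (two_ne_zero)]
      simp only [hS, ← hA, ← hB, ← hp, ← hq]
      push_cast at hg ⊢
      linarith [hg]
    simp only [hF, hSval]
    push_cast
    field_simp
    ring
  · -- the bound
    filter_upwards [eventually_ge_atTop 1] with n hn
    intro k
    have hn0 : (0 : ℝ) < n := by exact_mod_cast hn
    have hA0 : 0 ≤ ⌊a * (n : ℝ)⌋ := Int.floor_nonneg.2 (by positivity)
    have hBn : ⌊b * (n : ℝ)⌋ ≤ (n : ℤ) := by
      have : ⌊b * (n : ℝ)⌋ ≤ ⌊((n : ℤ) : ℝ)⌋ := Int.floor_le_floor (by push_cast; nlinarith)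
      simpa using this
    have hS0 : 0 ≤ S n k := by
      apply Finset.sum_nonneg
      intro i hi
      rw [Finset.mem_Icc] at hi
      have : (0:ℤ) ≤ i := by omega
      exact_mod_cast this
    have hSle : S n k ≤ (n : ℝ) * n := by
      calc S n k ≤ ∑ _i ∈ Finset.Icc (⌊a * (n : ℝ)⌋ + 1 + max 0 (-k)) (⌊b * (n : ℝ)⌋ - max 0 k),
            (n : ℝ) := by
              apply Finset.sum_le_sum
              intro i hi
              rw [Finset.mem_Icc] at hi
              have : i ≤ (n : ℤ) := by omega
              exact_mod_cast this
        _ ≤ (n : ℝ) * n := by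
              rw [Finset.sum_const, nsmul_eq_mul]
              apply mul_le_mul_of_nonneg_right _ hn0.le
              have hcard : (Finset.Icc (⌊a * (n : ℝ)⌋ + 1 + max 0 (-k)) (⌊b * (n : ℝ)⌋ - max 0 k)).card
                  = (⌊b * (n : ℝ)⌋ - max 0 k + 1 - (⌊a * (n : ℝ)⌋ + 1 + max 0 (-k))).toNat :=
                Int.card_Icc _ _
              have : (Finset.Icc (⌊a * (n : ℝ)⌋ + 1 + max 0 (-k)) (⌊b * (n : ℝ)⌋ - max 0 k)).card ≤ n := by
                rw [hcard]; omega
              exact_mod_cast this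
    have : ‖F n k‖ = |c k| * |S n k / (n : ℝ) ^ 2| := by
      rw [hF]; exact abs_mul _ _
    rw [this]
    have h1 : |S n k / (n : ℝ) ^ 2| ≤ 1 := by
      rw [abs_of_nonneg (by positivity), div_le_one (by positivity)]
      nlinarith
    nlinarith [abs_nonneg (c k)]
end

section
/- Let (c_j)_{j ∈ ℤ} be an absolutely summable sequence of real numbers with c_j = c_{-j} for all j, and let 0 ≤ a < b ≤ 1. Then (1/n) · Σ_{i=⌊an⌋+1}^{⌊bn⌋} Σ_{j=⌊an⌋+1}^{⌊bn⌋} (i/n)(j/n) · c_{j-i} converges, as n → ∞, to ((b³ - a³)/3) · Σ_{j ∈ ℤ} c_j. -/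
open Filter Finset

lemma sum_range_cast (N : ℕ) : ∑ i ∈ Finset.range N, (i:ℝ) = N*(N-1)/2 := by
  induction N with
  | zero => simp
  | succ m ih => rw [Finset.sum_range_succ, ih]; push_cast; ring

lemma sum_range_sq_cast (N : ℕ) : ∑ i ∈ Finset.range N, (i:ℝ)^2 = N*(N-1)*(2*N-1)/6 := by
  induction N with
  | zero => simp
  | succ m ih => rw [Finset.sum_range_succ, ih]; push_cast; ring

lemma hfloor (x : ℝ) : Filter.Tendsto (fun n:ℕ => ((⌊x*(n:ℝ)⌋ : ℤ):ℝ)/n) Filter.atTop (nhds x) := by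
  refine tendsto_of_tendsto_of_tendsto_of_le_of_le' (g := fun n:ℕ => x - 1/n)
    (h := fun n:ℕ => (x:ℝ)) ?_ ?_ ?_ ?_
  · simpa using tendsto_const_nhds.sub (tendsto_one_div_atTop_nhds_zero_nat (𝕜 := ℝ))
  · exact tendsto_const_nhds
  · filter_upwards [Filter.eventually_ge_atTop 1] with n hn
    have hn0 : (0:ℝ) < n := by positivity
    rw [sub_le_iff_le_add, ← add_div, le_div_iff₀ hn0]
    nlinarith [Int.sub_one_lt_floor (x*n)]
  · filter_upwards [Filter.eventually_ge_atTop 1] with n hn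
    have hn0 : (0:ℝ) < n := by positivity
    rw [div_le_iff₀ hn0]
    exact Int.floor_le (x*n)

lemma lim_shift (x : ℝ) (p : ℕ → ℤ) (d : ℤ)
    (hp : Tendsto (fun n : ℕ => (p n : ℝ)/n) atTop (nhds x)) :
    Tendsto (fun n : ℕ => ((p n + d : ℤ) : ℝ)/n) atTop (nhds x) := by
  have h := hp.add (tendsto_one_div_atTop_nhds_zero_nat.const_mul (d:ℝ))
  rw [show x + (d:ℝ)*0 = x by ring] at h
  refine h.congr fun n => ?_
  push_cast
  rw [mul_one_div, ← add_div]

set_option maxHeartbeats 1000000 in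
lemma lim_icc (a b : ℝ) (hab : a < b) (k : ℤ) (s t : ℕ → ℤ)
    (hs : Tendsto (fun n : ℕ => (s n : ℝ)/n) atTop (nhds a))
    (ht : Tendsto (fun n : ℕ => (t n : ℝ)/n) atTop (nhds b)) :
    Tendsto (fun n : ℕ => (∑ i ∈ Finset.Icc (s n) (t n), (i:ℝ)*((i:ℝ)+(k:ℝ)))/(n:ℝ)^3)
      atTop (nhds ((b^3-a^3)/3)) := by
  set N : ℕ → ℕ := fun n => (t n + 1 - s n).toNat with hN
  have hev : ∀ᶠ n : ℕ in atTop, s n ≤ t n + 1 ∧ 1 ≤ n := by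
    have h1 : ∀ᶠ n : ℕ in atTop, 0 < ((t n : ℝ)/n - (s n : ℝ)/n) :=
      (ht.sub hs).eventually (eventually_gt_nhds (sub_pos.mpr hab))
    filter_upwards [h1, eventually_ge_atTop 1] with n h hn
    refine ⟨?_, hn⟩
    have hn0 : (0:ℝ) < n := by positivity
    rw [div_sub_div_same] at h
    have h2 : (0:ℝ) < (t n : ℝ) - s n := by
      by_contra hc
      push_neg at hc
      have : ((t n : ℝ) - s n)/n ≤ 0 := div_nonpos_of_nonpos_of_nonneg hc (le_of_lt hn0)
      linarith
    have h3 : (s n : ℝ) < t n := by linarith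
    have h4 : s n < t n := by exact_mod_cast h3
    omega
  have hNlim : Tendsto (fun n : ℕ => (N n : ℝ)/n) atTop (nhds (b - a)) := by
    have h : Tendsto (fun n : ℕ => (t n : ℝ)/n + 1/n - (s n : ℝ)/n) atTop (nhds (b + 0 - a)) :=
      (ht.add tendsto_one_div_atTop_nhds_zero_nat).sub hs
    rw [add_zero] at h
    refine h.congr' ?_
    filter_upwards [hev] with n hn
    obtain ⟨h1, _⟩ := hn
    have hcast : ((N n : ℤ) : ℝ) = (t n : ℝ) + 1 - s n := by
      simp only [hN]; rw [Int.toNat_of_nonneg (by omega)]; push_cast; ring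
    push_cast at hcast
    rw [← add_div, div_sub_div_same, ← hcast]
  set G : ℝ → ℝ → ℝ → ℝ := fun u v w =>
    u*(u+(k:ℝ)*w)*v + (2*u+(k:ℝ)*w)*(v*(v-w))/2 + v*(v-w)*(2*v-w)/6 with hG
  have hGc : Continuous (fun p : ℝ × ℝ × ℝ => G p.1 p.2.1 p.2.2) := by
    simp only [hG]; fun_prop
  have hw : Tendsto (fun n : ℕ => 1/(n:ℝ)) atTop (nhds 0) := tendsto_one_div_atTop_nhds_zero_nat
  have hcomp : Tendsto (fun n : ℕ => G ((s n:ℝ)/n) ((N n:ℝ)/n) (1/n)) atTop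
      (nhds (G a (b-a) 0)) :=
    (hGc.tendsto (a, b-a, 0)).comp (hs.prodMk_nhds (hNlim.prodMk_nhds hw))
  have hval : G a (b-a) 0 = (b^3-a^3)/3 := by simp only [hG]; ring
  rw [hval] at hcomp
  refine hcomp.congr' ?_
  filter_upwards [hev] with n hn
  obtain ⟨h1, hn1⟩ := hn
  have hn0 : (n:ℝ) ≠ 0 := by positivity
  have hinj : Function.Injective (fun m : ℕ => s n + (m:ℤ)) :=
    fun x y hxy => by exact_mod_cast add_left_cancel hxy
  have hmap : Finset.Icc (s n) (t n)
      = (Finset.range (N n)).map ⟨fun m : ℕ => s n + (m:ℤ),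
          hinj⟩ := by
    ext x
    simp only [Finset.mem_Icc, Finset.mem_map, Finset.mem_range, Function.Embedding.coeFn_mk, hN]
    constructor
    · rintro ⟨hx1, hx2⟩
      exact ⟨(x - s n).toNat, by omega, by omega⟩
    · rintro ⟨m, hm, rfl⟩
      omega
  rw [hmap, Finset.sum_map]
  simp only [Function.Embedding.coeFn_mk]
  have hsplit : ∑ m ∈ Finset.range (N n), ((s n + (m:ℤ) : ℤ):ℝ)*(((s n + (m:ℤ) : ℤ):ℝ)+(k:ℝ))
      = (N n) * ((s n:ℝ)*((s n:ℝ)+(k:ℝ))) + (2*(s n:ℝ)+(k:ℝ)) * (∑ m ∈ Finset.range (N n), (m:ℝ))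
        + ∑ m ∈ Finset.range (N n), (m:ℝ)^2 := by
    calc ∑ m ∈ Finset.range (N n), ((s n + (m:ℤ) : ℤ):ℝ)*(((s n + (m:ℤ) : ℤ):ℝ)+(k:ℝ))
        = ∑ m ∈ Finset.range (N n),
            ((s n:ℝ)*((s n:ℝ)+(k:ℝ)) + (2*(s n:ℝ)+(k:ℝ))*(m:ℝ) + (m:ℝ)^2) :=
          Finset.sum_congr rfl fun m _ => by push_cast; ring
      _ = _ := by
          rw [Finset.sum_add_distrib, Finset.sum_add_distrib, Finset.sum_const,
            ← Finset.mul_sum, Finset.card_range, nsmul_eq_mul]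
  rw [hsplit, sum_range_cast, sum_range_sq_cast]
  simp only [hG]
  field_simp

lemma key_eq (c : ℤ → ℝ) (n : ℕ) (I : Finset ℤ) :
    (1/(n:ℝ)) * ∑ i ∈ I, ∑ j ∈ I, ((i:ℝ)/n) * ((j:ℝ)/n) * c (j - i)
      = ∑' k : ℤ, ((∑ i ∈ I, if i + k ∈ I then (i:ℝ)*((i:ℝ)+(k:ℝ)) else 0) / (n:ℝ)^3 * c k) := by
  calc (1/(n:ℝ)) * ∑ i ∈ I, ∑ j ∈ I, ((i:ℝ)/n) * ((j:ℝ)/n) * c (j - i)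
      = ∑ i ∈ I, ∑ j ∈ I, (i:ℝ)*(j:ℝ)*c (j-i)/(n:ℝ)^3 := by
        rw [Finset.mul_sum]
        refine Finset.sum_congr rfl fun i _ => ?_
        rw [Finset.mul_sum]
        refine Finset.sum_congr rfl fun j _ => ?_
        ring
    _ = ∑ i ∈ I, ∑' k : ℤ, (if i + k ∈ I then (i:ℝ)*((i:ℝ)+(k:ℝ)) * c k / (n:ℝ)^3 else 0) := by
        refine Finset.sum_congr rfl fun i hi => ?_
        rw [tsum_eq_sum (s := I.image (fun j => j - i)) (f := fun k =>
            if i + k ∈ I then (i:ℝ)*((i:ℝ)+(k:ℝ)) * c k / (n:ℝ)^3 else 0) (fun k hk => by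
          show (if i + k ∈ I then (i:ℝ)*((i:ℝ)+(k:ℝ)) * c k / (n:ℝ)^3 else 0) = 0
          rw [if_neg]
          intro hmem
          exact hk (Finset.mem_image.mpr ⟨i+k, hmem, by ring⟩))]
        rw [Finset.sum_image (fun x _ y _ h => by omega)]
        refine Finset.sum_congr rfl fun j hj => ?_
        rw [if_pos (by rwa [show i + (j - i) = j from by ring])]
        push_cast
        ring
    _ = ∑' k : ℤ, ∑ i ∈ I, (if i + k ∈ I then (i:ℝ)*((i:ℝ)+(k:ℝ)) * c k / (n:ℝ)^3 else 0) := by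
        refine (Summable.tsum_finsetSum fun i hi => ?_).symm
        refine summable_of_ne_finset_zero (s := I.image (fun j => j - i)) (fun k hk => ?_)
        show (if i + k ∈ I then (i:ℝ)*((i:ℝ)+(k:ℝ)) * c k / (n:ℝ)^3 else 0) = 0
        rw [if_neg]
        intro hmem
        exact hk (Finset.mem_image.mpr ⟨i+k, hmem, by ring⟩)
    _ = ∑' k : ℤ, ((∑ i ∈ I, if i + k ∈ I then (i:ℝ)*((i:ℝ)+(k:ℝ)) else 0) / (n:ℝ)^3 * c k) := by
        refine tsum_congr fun k => ?_
        rw [Finset.sum_div, Finset.sum_mul]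
        refine Finset.sum_congr rfl fun i _ => ?_
        split_ifs
        · ring
        · simp

theorem stmt_2 (c : ℤ → ℝ) (hsum : Summable (fun j => |c j|))
    (hsym : ∀ j, c j = c (-j)) (a b : ℝ) (ha : 0 ≤ a) (hab : a < b) (hb : b ≤ 1) :
    Filter.Tendsto (fun n : ℕ =>
      (1 / (n : ℝ)) * ∑ i ∈ Finset.Icc (⌊a * (n : ℝ)⌋ + 1) ⌊b * (n : ℝ)⌋,
        ∑ j ∈ Finset.Icc (⌊a * (n : ℝ)⌋ + 1) ⌊b * (n : ℝ)⌋,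
          ((i : ℝ) / (n : ℝ)) * ((j : ℝ) / (n : ℝ)) * c (j - i))
      Filter.atTop (nhds (((b ^ 3 - a ^ 3) / 3) * ∑' j, c j)) := by
  have hkey : ∀ n : ℕ, (1/(n:ℝ)) * ∑ i ∈ Finset.Icc (⌊a * (n:ℝ)⌋ + 1) ⌊b * (n:ℝ)⌋,
        ∑ j ∈ Finset.Icc (⌊a * (n:ℝ)⌋ + 1) ⌊b * (n:ℝ)⌋,
          ((i : ℝ) / (n : ℝ)) * ((j : ℝ) / (n : ℝ)) * c (j - i)
      = ∑' k : ℤ, ((∑ i ∈ Finset.Icc (⌊a * (n:ℝ)⌋ + 1) ⌊b * (n:ℝ)⌋,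
          if i + k ∈ Finset.Icc (⌊a * (n:ℝ)⌋ + 1) ⌊b * (n:ℝ)⌋
            then (i:ℝ)*((i:ℝ)+(k:ℝ)) else 0) / (n:ℝ)^3 * c k) :=
    fun n => key_eq c n _
  rw [show ((b ^ 3 - a ^ 3) / 3) * ∑' j, c j = ∑' k : ℤ, ((b ^ 3 - a ^ 3) / 3) * c k from
    tsum_mul_left.symm]
  refine Filter.Tendsto.congr (fun n => (hkey n).symm)
    (tendsto_tsum_of_dominated_convergence (bound := fun k => |c k|) hsum ?_ ?_)
  · -- pointwise limits
    intro k
    have hs := lim_shift a _ (1 - min k 0) (hfloor a)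
    have ht := lim_shift b _ (- max k 0) (hfloor b)
    have hlim := (lim_icc a b hab k _ _ hs ht).mul_const (c k)
    refine hlim.congr fun n => ?_
    have hset : Finset.Icc (⌊a * (n:ℝ)⌋ + (1 - min k 0)) (⌊b * (n:ℝ)⌋ + (- max k 0))
        = (Finset.Icc (⌊a * (n:ℝ)⌋ + 1) ⌊b * (n:ℝ)⌋).filter
            (fun i => i + k ∈ Finset.Icc (⌊a * (n:ℝ)⌋ + 1) ⌊b * (n:ℝ)⌋) := by
      ext x
      simp only [Finset.mem_Icc, Finset.mem_filter]
      omega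
    rw [hset, Finset.sum_filter]
  · -- bound
    filter_upwards [eventually_ge_atTop 1] with n hn
    intro k
    have hn0 : (0:ℝ) < n := by positivity
    have hA0 : (0:ℤ) ≤ ⌊a * (n:ℝ)⌋ := Int.floor_nonneg.mpr (by positivity)
    have hBr : ((⌊b * (n:ℝ)⌋ : ℤ) : ℝ) ≤ (n:ℝ) :=
      le_trans (Int.floor_le _) (by nlinarith)
    have hBz : ⌊b * (n:ℝ)⌋ ≤ (n:ℤ) := by exact_mod_cast hBr
    set I := Finset.Icc (⌊a * (n:ℝ)⌋ + 1) ⌊b * (n:ℝ)⌋ with hI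
    set S := ∑ i ∈ I, if i + k ∈ I then (i:ℝ)*((i:ℝ)+(k:ℝ)) else 0 with hS
    have hterm : ∀ i ∈ I, (0:ℝ) ≤ (if i + k ∈ I then (i:ℝ)*((i:ℝ)+(k:ℝ)) else 0) ∧
        (if i + k ∈ I then (i:ℝ)*((i:ℝ)+(k:ℝ)) else 0) ≤ (n:ℝ)^2 := by
      intro i hi
      rw [hI, Finset.mem_Icc] at hi
      split_ifs with h
      · rw [hI, Finset.mem_Icc] at h
        have h1 : (1:ℝ) ≤ (i:ℝ) := by exact_mod_cast (by omega : (1:ℤ) ≤ i)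
        have h2 : (i:ℝ) ≤ (n:ℝ) := le_trans (by exact_mod_cast hi.2) hBr
        have h3 : (1:ℝ) ≤ (i:ℝ)+(k:ℝ) := by
          have : (1:ℤ) ≤ i + k := by omega
          have h3' : ((1:ℤ):ℝ) ≤ ((i+k:ℤ):ℝ) := by exact_mod_cast this
          push_cast at h3'
          linarith
        have h4 : (i:ℝ)+(k:ℝ) ≤ (n:ℝ) := by
          have : ((i + k : ℤ):ℝ) ≤ (⌊b * (n:ℝ)⌋ : ℝ) := by exact_mod_cast h.2
          push_cast at this
          linarith
        constructor
        · positivity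
        · rw [sq]
          exact mul_le_mul h2 h4 (by linarith) (by linarith)
      · exact ⟨le_refl _, by positivity⟩
    have hS0 : (0:ℝ) ≤ S := Finset.sum_nonneg fun i hi => (hterm i hi).1
    have hcard : (I.card : ℝ) ≤ (n:ℝ) := by
      have : I.card = (⌊b * (n:ℝ)⌋ + 1 - (⌊a * (n:ℝ)⌋ + 1)).toNat := by
        rw [hI, Int.card_Icc]
      have hle : I.card ≤ n := by omega
      exact_mod_cast hle
    have hSle : S ≤ (n:ℝ)^3 := by
      calc S ≤ ∑ _i ∈ I, (n:ℝ)^2 := Finset.sum_le_sum fun i hi => (hterm i hi).2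
        _ = (I.card : ℝ) * (n:ℝ)^2 := by rw [Finset.sum_const, nsmul_eq_mul]
        _ ≤ (n:ℝ) * (n:ℝ)^2 := by nlinarith
        _ = (n:ℝ)^3 := by ring
    rw [Real.norm_eq_abs, abs_mul]
    have hdiv : |S / (n:ℝ)^3| ≤ 1 := by
      rw [abs_of_nonneg (div_nonneg hS0 (by positivity))]
      exact (div_le_one (by positivity)).mpr hSle
    calc |S / (n:ℝ)^3| * |c k| ≤ 1 * |c k| :=
          mul_le_mul_of_nonneg_right hdiv (abs_nonneg _)
      _ = |c k| := one_mul _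
end
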